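/- Let X, Y₊, Y₋, Z be compact metrizable topological spaces, let f₊ : X → Y₊, f₋ : X → Y₋, g₊ : Y₊ → Z, g₋ : Y₋ → Z be continuous maps, and let H : X × [0,1] → Z be a continuous homotopy with H(x,0) = g₊(f₊(x)) and H(x,1) = g₋(f₋(x)) for all x ∈ X. Define Φ₊ : MC(f₊) → MC(g₋) by Φ₊([x,t]) = H(x, 2t) ∈ Z ⊆ MC(g₋) for 0 ≤ t ≤ 1/2, Φ₊([x,t]) = [f₋(x), 2t−1] for 1/2 ≤ t ≤ 1, and Φ₊(y) = g₊(y) ∈ Z for y ∈ Y₊; define Φ₋ : MC(f₋) → MC(g₊) by Φ₋([x,t]) = H(x, 1−2t) ∈ Z ⊆ MC(g₊) for 0 ≤ t ≤ 1/2, Φ₋([x,t]) = [f₊(x), 2t−1] for 1/2 ≤ t ≤ 1, and Φ₋(y) = g₋(y) ∈ Z for y ∈ Y₋. Then Φ₊ and Φ₋ are well-defined continuous maps, and the mapping cylinders MC(Φ₊) and MC(Φ₋) are homeomorphic. -/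

import Mathlib

open unitInterval

/-- The defining relation of the mapping cylinder of `u : A → B`: the point `(a, 0)`
of the cylinder `A × [0,1]` is identified with `u a ∈ B`. -/
def MCRel {A B : Type*} (u : A → B) :
    (A × unitInterval ⊕ B) → (A × unitInterval ⊕ B) → Prop :=
  fun x y => ∃ a, x = Sum.inl (a, 0) ∧ y = Sum.inr (u a)

/-- The mapping cylinder of `u : A → B`: the quotient of `(A × [0,1]) ⊔ B` by the
identifications `(a, 0) ∼ u a`, with the quotient topology. -/
def MC {A B : Type*} [TopologicalSpace A] [TopologicalSpace B] (u : A → B) : Type _ :=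
  Quot (MCRel u)

instance {A B : Type*} [TopologicalSpace A] [TopologicalSpace B] (u : A → B) :
    TopologicalSpace (MC u) :=
  inferInstanceAs (TopologicalSpace (Quot (MCRel u)))

/-- The class `[a, t]` of a cylinder point in the mapping cylinder. -/
def MC.cyl {A B : Type*} [TopologicalSpace A] [TopologicalSpace B] (u : A → B)
    (a : A) (t : unitInterval) : MC u :=
  Quot.mk _ (Sum.inl (a, t))

/-- The class of a point of `B` in the mapping cylinder (the `0`-end). -/
def MC.base {A B : Type*} [TopologicalSpace A] [TopologicalSpace B] (u : A → B)
    (b : B) : MC u :=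
  Quot.mk _ (Sum.inr b)

namespace MCAux


noncomputable def pr (r : ℝ) : unitInterval := Set.projIcc 0 1 zero_le_one r

lemma pr_mem {r : ℝ} (h0 : 0 ≤ r) (h1 : r ≤ 1) : pr r = ⟨r, h0, h1⟩ :=
  Set.projIcc_of_mem _ ⟨h0, h1⟩

lemma pr_coe {r : ℝ} (h0 : 0 ≤ r) (h1 : r ≤ 1) : ((pr r : unitInterval) : ℝ) = r := by
  rw [pr_mem h0 h1]

lemma pr_val (t : unitInterval) : pr (t : ℝ) = t := by
  rw [pr_mem t.2.1 t.2.2]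

lemma continuous_pr : Continuous pr := @continuous_projIcc ℝ _ 0 1 zero_le_one _ _

lemma pr_zero : pr 0 = 0 := Subtype.ext (pr_coe le_rfl zero_le_one)

noncomputable def cl (r : ℝ) : ℝ := min 1 (max 0 r)

lemma cl_eq {r : ℝ} (h0 : 0 ≤ r) (h1 : r ≤ 1) : cl r = r := by
  simp [cl, max_eq_right h0, min_eq_right h1]

lemma continuous_cl : Continuous cl :=
  continuous_const.min (continuous_const.max continuous_id)

noncomputable def sqF : ℝ × ℝ → ℝ × ℝ := fun p =>
  if p.1 ≤ p.2 then ((1 + p.2) / 2, p.1)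
  else if 2 * p.1 ≤ 1 + p.2 then ((1 - 2 * p.1 + 3 * p.2) / 2, p.2)
  else (p.2, 2 * p.1 - 1)

noncomputable def sqG : ℝ × ℝ → ℝ × ℝ := fun p =>
  if 1 + p.2 ≤ 2 * p.1 then (p.2, 2 * p.1 - 1)
  else if p.2 ≤ p.1 then ((1 + 3 * p.2 - 2 * p.1) / 2, p.2)
  else ((1 + p.2) / 2, p.1)

lemma sqF_mem {t s : ℝ} (ht0 : 0 ≤ t) (ht1 : t ≤ 1) (hs0 : 0 ≤ s) (hs1 : s ≤ 1) :
    (0 ≤ (sqF (t, s)).1 ∧ (sqF (t, s)).1 ≤ 1) ∧ (0 ≤ (sqF (t, s)).2 ∧ (sqF (t, s)).2 ≤ 1) := by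
  simp only [sqF]
  split_ifs with h1 h2 <;>
    refine ⟨⟨?_, ?_⟩, ?_, ?_⟩ <;> dsimp only <;> linarith

lemma sqG_mem {t s : ℝ} (ht0 : 0 ≤ t) (ht1 : t ≤ 1) (hs0 : 0 ≤ s) (hs1 : s ≤ 1) :
    (0 ≤ (sqG (t, s)).1 ∧ (sqG (t, s)).1 ≤ 1) ∧ (0 ≤ (sqG (t, s)).2 ∧ (sqG (t, s)).2 ≤ 1) := by
  simp only [sqG]
  split_ifs with h1 h2 <;>
    refine ⟨⟨?_, ?_⟩, ?_, ?_⟩ <;> dsimp only <;> linarith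

lemma sqG_sqF (t s : ℝ) : sqG (sqF (t, s)) = (t, s) := by
  simp only [sqF, sqG]
  split_ifs <;> dsimp only at * <;>
    first
      | (refine Prod.ext ?_ ?_ <;> dsimp only <;> linarith)
      | (exfalso; linarith)

lemma sqF_sqG (t s : ℝ) : sqF (sqG (t, s)) = (t, s) := by
  simp only [sqF, sqG]
  split_ifs <;> dsimp only at * <;>
    first
      | (refine Prod.ext ?_ ?_ <;> dsimp only <;> linarith)
      | (exfalso; linarith)

noncomputable def sqFc : ℝ × ℝ → ℝ × ℝ := fun p => sqF (cl p.1, cl p.2)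
noncomputable def sqGc : ℝ × ℝ → ℝ × ℝ := fun p => sqG (cl p.1, cl p.2)

lemma sqFc_eq {t s : ℝ} (ht0 : 0 ≤ t) (ht1 : t ≤ 1) (hs0 : 0 ≤ s) (hs1 : s ≤ 1) :
    sqFc (t, s) = sqF (t, s) := by
  simp only [sqFc]
  rw [cl_eq ht0 ht1, cl_eq hs0 hs1]

lemma sqGc_eq {t s : ℝ} (ht0 : 0 ≤ t) (ht1 : t ≤ 1) (hs0 : 0 ≤ s) (hs1 : s ≤ 1) :
    sqGc (t, s) = sqG (t, s) := by
  simp only [sqGc]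
  rw [cl_eq ht0 ht1, cl_eq hs0 hs1]

lemma cl_nonneg (r : ℝ) : 0 ≤ cl r := le_min zero_le_one (le_max_left _ _)
lemma cl_le_one (r : ℝ) : cl r ≤ 1 := min_le_left _ _

lemma continuous_sqFc : Continuous sqFc := by
  have h1 : Continuous fun p : ℝ × ℝ => cl p.1 := continuous_cl.comp continuous_fst
  have h2 : Continuous fun p : ℝ × ℝ => cl p.2 := continuous_cl.comp continuous_snd
  have key : Continuous fun p : ℝ × ℝ =>
      if cl p.1 ≤ cl p.2 then ((1 + cl p.2) / 2, cl p.1)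
      else if 2 * cl p.1 ≤ 1 + cl p.2 then ((1 - 2 * cl p.1 + 3 * cl p.2) / 2, cl p.2)
      else (cl p.2, 2 * cl p.1 - 1) := by
    apply Continuous.if_le
    · exact ((continuous_const.add h2).div_const 2).prodMk h1
    · apply Continuous.if_le
      · exact (((continuous_const.sub (continuous_const.mul h1)).add
          (continuous_const.mul h2)).div_const 2).prodMk h2
      · exact h2.prodMk ((continuous_const.mul h1).sub continuous_const)
      · exact continuous_const.mul h1
      · exact continuous_const.add h2
      · intro p hp
        refine Prod.ext ?_ ?_ <;> dsimp only <;> linarith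
    · exact h1
    · exact h2
    · intro p hp
      have hcl : cl p.1 ≤ 1 := cl_le_one _
      rw [if_pos (show 2 * cl p.1 ≤ 1 + cl p.2 by rw [← hp]; linarith)]
      refine Prod.ext ?_ ?_ <;> dsimp only <;> linarith
  exact key

lemma continuous_sqGc : Continuous sqGc := by
  have h1 : Continuous fun p : ℝ × ℝ => cl p.1 := continuous_cl.comp continuous_fst
  have h2 : Continuous fun p : ℝ × ℝ => cl p.2 := continuous_cl.comp continuous_snd
  have key : Continuous fun p : ℝ × ℝ =>
      if 1 + cl p.2 ≤ 2 * cl p.1 then (cl p.2, 2 * cl p.1 - 1)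
      else if cl p.2 ≤ cl p.1 then ((1 + 3 * cl p.2 - 2 * cl p.1) / 2, cl p.2)
      else ((1 + cl p.2) / 2, cl p.1) := by
    apply Continuous.if_le
    · exact h2.prodMk ((continuous_const.mul h1).sub continuous_const)
    · apply Continuous.if_le
      · exact (((continuous_const.add (continuous_const.mul h2)).sub
          (continuous_const.mul h1)).div_const 2).prodMk h2
      · exact ((continuous_const.add h2).div_const 2).prodMk h1
      · exact h2
      · exact h1
      · intro p hp
        refine Prod.ext ?_ ?_ <;> dsimp only <;> linarith
    · exact continuous_const.add h2
    · exact continuous_const.mul h1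
    · intro p hp
      have h0cl : 0 ≤ cl p.2 := cl_nonneg _
      have h1cl : cl p.2 ≤ 1 := cl_le_one _
      rw [if_pos (show cl p.2 ≤ cl p.1 by linarith)]
      refine Prod.ext ?_ ?_ <;> dsimp only <;> linarith
  exact key

noncomputable def eF : unitInterval × unitInterval → unitInterval × unitInterval :=
  fun p => (pr (sqFc ((p.1 : ℝ), (p.2 : ℝ))).1, pr (sqFc ((p.1 : ℝ), (p.2 : ℝ))).2)

noncomputable def eG : unitInterval × unitInterval → unitInterval × unitInterval :=
  fun p => (pr (sqGc ((p.1 : ℝ), (p.2 : ℝ))).1, pr (sqGc ((p.1 : ℝ), (p.2 : ℝ))).2)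

lemma continuous_eF : Continuous eF := by
  have base : Continuous fun p : unitInterval × unitInterval =>
      sqFc ((p.1 : ℝ), (p.2 : ℝ)) :=
    continuous_sqFc.comp ((continuous_subtype_val.comp continuous_fst).prodMk
      (continuous_subtype_val.comp continuous_snd))
  exact (continuous_pr.comp (continuous_fst.comp base)).prodMk
    (continuous_pr.comp (continuous_snd.comp base))

lemma continuous_eG : Continuous eG := by
  have base : Continuous fun p : unitInterval × unitInterval =>
      sqGc ((p.1 : ℝ), (p.2 : ℝ)) :=
    continuous_sqGc.comp ((continuous_subtype_val.comp continuous_fst).prodMk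
      (continuous_subtype_val.comp continuous_snd))
  exact (continuous_pr.comp (continuous_fst.comp base)).prodMk
    (continuous_pr.comp (continuous_snd.comp base))

lemma eG_eF (p : unitInterval × unitInterval) : eG (eF p) = p := by
  obtain ⟨⟨t, ht0, ht1⟩, ⟨s, hs0, hs1⟩⟩ := p
  have m := sqF_mem ht0 ht1 hs0 hs1
  show (pr (sqGc (↑(pr (sqFc (t, s)).1), ↑(pr (sqFc (t, s)).2))).1,
      pr (sqGc (↑(pr (sqFc (t, s)).1), ↑(pr (sqFc (t, s)).2))).2) = _
  rw [sqFc_eq ht0 ht1 hs0 hs1]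
  rw [pr_coe m.1.1 m.1.2, pr_coe m.2.1 m.2.2]
  rw [sqGc_eq m.1.1 m.1.2 m.2.1 m.2.2]
  show (pr (sqG (sqF (t, s))).1, pr (sqG (sqF (t, s))).2) = _
  rw [sqG_sqF t s]
  show (pr t, pr s) = _
  rw [pr_mem ht0 ht1, pr_mem hs0 hs1]

lemma eF_eG (p : unitInterval × unitInterval) : eF (eG p) = p := by
  obtain ⟨⟨t, ht0, ht1⟩, ⟨s, hs0, hs1⟩⟩ := p
  have m := sqG_mem ht0 ht1 hs0 hs1
  show (pr (sqFc (↑(pr (sqGc (t, s)).1), ↑(pr (sqGc (t, s)).2))).1,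
      pr (sqFc (↑(pr (sqGc (t, s)).1), ↑(pr (sqGc (t, s)).2))).2) = _
  rw [sqGc_eq ht0 ht1 hs0 hs1]
  rw [pr_coe m.1.1 m.1.2, pr_coe m.2.1 m.2.2]
  rw [sqFc_eq m.1.1 m.1.2 m.2.1 m.2.2]
  show (pr (sqF (sqG (t, s))).1, pr (sqF (sqG (t, s))).2) = _
  rw [sqF_sqG t s]
  show (pr t, pr s) = _
  rw [pr_mem ht0 ht1, pr_mem hs0 hs1]

lemma eF_c1 (s : unitInterval) : eF (0, s) = (pr ((1 + (s : ℝ)) / 2), 0) := by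
  obtain ⟨s, hs0, hs1⟩ := s
  show (pr (sqFc (0, s)).1, pr (sqFc (0, s)).2) = _
  rw [sqFc_eq le_rfl zero_le_one hs0 hs1]
  rw [show sqF ((0 : ℝ), s) = ((1 + s) / 2, 0) from by
    simp only [sqF]; rw [if_pos (show (0:ℝ) ≤ s from hs0)]]
  show (pr ((1 + s) / 2), pr 0) = _
  rw [pr_mem (by linarith) (by linarith), pr_zero]

lemma eF_c2 (t : unitInterval) (h : (t : ℝ) ≤ 1 / 2) :
    eF (t, 0) = (pr (1 / 2 - (t : ℝ)), 0) := by
  obtain ⟨t, ht0, ht1⟩ := t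
  have h' : t ≤ 1 / 2 := h
  show (pr (sqFc (t, 0)).1, pr (sqFc (t, 0)).2) = _
  rw [sqFc_eq ht0 ht1 le_rfl zero_le_one]
  rcases eq_or_lt_of_le ht0 with heq | hpos
  · rw [show sqF ((t : ℝ), 0) = (1 / 2 - t, 0) from by
      simp only [sqF]; rw [if_pos (show (t:ℝ) ≤ 0 from le_of_eq heq.symm)]
      refine Prod.ext ?_ ?_ <;> dsimp only <;> linarith]
    show (pr (1 / 2 - t), pr 0) = _
    rw [pr_mem (by linarith) (by linarith), pr_zero]
  · rw [show sqF ((t : ℝ), 0) = (1 / 2 - t, 0) from by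
      simp only [sqF]
      rw [if_neg (show ¬ (t:ℝ) ≤ 0 from not_le.mpr hpos),
        if_pos (show 2 * (t:ℝ) ≤ 1 + 0 by linarith)]
      refine Prod.ext ?_ ?_ <;> dsimp only <;> linarith]
    show (pr (1 / 2 - t), pr 0) = _
    rw [pr_mem (by linarith) (by linarith), pr_zero]

lemma eF_c3 (t : unitInterval) (h : 1 / 2 ≤ (t : ℝ)) :
    eF (t, 0) = (0, pr (2 * (t : ℝ) - 1)) := by
  obtain ⟨t, ht0, ht1⟩ := t
  have h' : 1 / 2 ≤ t := h
  show (pr (sqFc (t, 0)).1, pr (sqFc (t, 0)).2) = _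
  rw [sqFc_eq ht0 ht1 le_rfl zero_le_one]
  rcases le_or_gt (2 * t) 1 with hle | hgt
  · rw [show sqF ((t : ℝ), 0) = (0, 2 * t - 1) from by
      simp only [sqF]
      rw [if_neg (show ¬ (t:ℝ) ≤ 0 by intro hc; linarith),
        if_pos (show 2 * (t:ℝ) ≤ 1 + 0 by linarith)]
      refine Prod.ext ?_ ?_ <;> dsimp only <;> linarith]
    show (pr 0, pr (2 * t - 1)) = _
    rw [pr_zero]
  · rw [show sqF ((t : ℝ), 0) = (0, 2 * t - 1) from by
      simp only [sqF]
      rw [if_neg (show ¬ (t:ℝ) ≤ 0 by intro hc; linarith),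
        if_neg (show ¬ 2 * (t:ℝ) ≤ 1 + 0 by intro hc; linarith)]]
    show (pr 0, pr (2 * t - 1)) = _
    rw [pr_zero]

lemma eG_c1 (s : unitInterval) : eG (0, s) = (pr ((1 + (s : ℝ)) / 2), 0) := by
  obtain ⟨s, hs0, hs1⟩ := s
  show (pr (sqGc (0, s)).1, pr (sqGc (0, s)).2) = _
  rw [sqGc_eq le_rfl zero_le_one hs0 hs1]
  rcases eq_or_lt_of_le hs0 with heq | hpos
  · rw [show sqG ((0 : ℝ), s) = ((1 + s) / 2, 0) from by
      simp only [sqG]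
      rw [if_neg (show ¬ (1:ℝ) + s ≤ 2 * 0 by intro hc; linarith),
        if_pos (show (s:ℝ) ≤ 0 from le_of_eq heq.symm)]
      refine Prod.ext ?_ ?_ <;> dsimp only <;> linarith]
    show (pr ((1 + s) / 2), pr 0) = _
    rw [pr_mem (by linarith) (by linarith), pr_zero]
  · rw [show sqG ((0 : ℝ), s) = ((1 + s) / 2, 0) from by
      simp only [sqG]
      rw [if_neg (show ¬ (1:ℝ) + s ≤ 2 * 0 by intro hc; linarith),
        if_neg (show ¬ (s:ℝ) ≤ 0 from not_le.mpr hpos)]]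
    show (pr ((1 + s) / 2), pr 0) = _
    rw [pr_mem (by linarith) (by linarith), pr_zero]

lemma eG_c2 (t : unitInterval) (h : (t : ℝ) ≤ 1 / 2) :
    eG (t, 0) = (pr (1 / 2 - (t : ℝ)), 0) := by
  obtain ⟨t, ht0, ht1⟩ := t
  have h' : t ≤ 1 / 2 := h
  show (pr (sqGc (t, 0)).1, pr (sqGc (t, 0)).2) = _
  rw [sqGc_eq ht0 ht1 le_rfl zero_le_one]
  rcases le_or_gt (1 : ℝ) (2 * t) with hge | hlt
  · rw [show sqG ((t : ℝ), 0) = (1 / 2 - t, 0) from by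
      simp only [sqG]
      rw [if_pos (show (1:ℝ) + 0 ≤ 2 * t by linarith)]
      refine Prod.ext ?_ ?_ <;> dsimp only <;> linarith]
    show (pr (1 / 2 - t), pr 0) = _
    rw [pr_mem (by linarith) (by linarith), pr_zero]
  · rw [show sqG ((t : ℝ), 0) = (1 / 2 - t, 0) from by
      simp only [sqG]
      rw [if_neg (show ¬ (1:ℝ) + 0 ≤ 2 * t by intro hc; linarith),
        if_pos (show (0:ℝ) ≤ t from ht0)]
      refine Prod.ext ?_ ?_ <;> dsimp only <;> linarith]
    show (pr (1 / 2 - t), pr 0) = _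
    rw [pr_mem (by linarith) (by linarith), pr_zero]

lemma eG_c3 (t : unitInterval) (h : 1 / 2 ≤ (t : ℝ)) :
    eG (t, 0) = (0, pr (2 * (t : ℝ) - 1)) := by
  obtain ⟨t, ht0, ht1⟩ := t
  have h' : 1 / 2 ≤ t := h
  show (pr (sqGc (t, 0)).1, pr (sqGc (t, 0)).2) = _
  rw [sqGc_eq ht0 ht1 le_rfl zero_le_one]
  rw [show sqG ((t : ℝ), 0) = (0, 2 * t - 1) from by
    simp only [sqG]
    rw [if_pos (show (1:ℝ) + 0 ≤ 2 * t by linarith)]]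
  show (pr 0, pr (2 * t - 1)) = _
  rw [pr_zero]


section Phi

variable {X Y Y' Z : Type} [TopologicalSpace X] [TopologicalSpace Y]
  [TopologicalSpace Y'] [TopologicalSpace Z]
  (f : X → Y) (f' : X → Y') (g : Y → Z) (g' : Y' → Z) (H : X × unitInterval → Z)

lemma cyl_zero_eq_base (u : X → Y) (x : X) : MC.cyl u x 0 = MC.base u (u x) :=
  Quot.sound ⟨x, rfl, rfl⟩

noncomputable def PhiFun : (X × unitInterval ⊕ Y) → MC g' :=
  Sum.elim
    (fun q => if (q.2 : ℝ) ≤ 1 / 2 then MC.base g' (H (q.1, pr (2 * q.2)))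
      else MC.cyl g' (f' q.1) (pr (2 * q.2 - 1)))
    (fun y => MC.base g' (g y))

noncomputable def Phi (hH0 : ∀ x, H (x, 0) = g (f x)) : MC f → MC g' :=
  Quot.lift (PhiFun f' g g' H) (by
    rintro a b ⟨x, rfl, rfl⟩
    simp only [PhiFun, Sum.elim_inl, Sum.elim_inr]
    rw [if_pos (by norm_num : ((0 : unitInterval) : ℝ) ≤ 1 / 2)]
    have : pr (2 * ((0 : unitInterval) : ℝ)) = 0 := by
      rw [show (2 : ℝ) * ((0 : unitInterval) : ℝ) = 0 by norm_num]
      exact pr_val 0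
    rw [this, hH0])

variable (hH0 : ∀ x, H (x, 0) = g (f x))

lemma Phi_base (y : Y) : Phi f f' g g' H hH0 (MC.base f y) = MC.base g' (g y) := rfl

lemma Phi_cyl_le (x : X) (t : ℝ) (h0 : 0 ≤ t) (h2 : t ≤ 1 / 2) :
    Phi f f' g g' H hH0 (MC.cyl f x ⟨t, h0, by linarith⟩) =
      MC.base g' (H (x, ⟨2 * t, by constructor <;> linarith⟩)) := by
  show PhiFun f' g g' H (Sum.inl (x, ⟨t, h0, by linarith⟩)) = _
  simp only [PhiFun, Sum.elim_inl]
  rw [if_pos (show ((⟨t, h0, by linarith⟩ : unitInterval) : ℝ) ≤ 1 / 2 from h2)]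
  rw [show pr (2 * ((⟨t, h0, by linarith⟩ : unitInterval) : ℝ)) =
    ⟨2 * t, by constructor <;> linarith⟩ from pr_mem (by linarith) (by linarith)]

lemma Phi_cyl_ge (hH1 : ∀ x, H (x, 1) = g' (f' x)) (x : X) (t : ℝ)
    (h2 : 1 / 2 ≤ t) (h1 : t ≤ 1) :
    Phi f f' g g' H hH0 (MC.cyl f x ⟨t, by linarith, h1⟩) =
      MC.cyl g' (f' x) ⟨2 * t - 1, by constructor <;> linarith⟩ := by
  have h0 : (0:ℝ) ≤ t := by linarith
  show PhiFun f' g g' H (Sum.inl (x, ⟨t, h0, h1⟩)) = _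
  simp only [PhiFun, Sum.elim_inl]
  rcases eq_or_lt_of_le h2 with heq | hlt
  · rw [if_pos (show ((⟨t, h0, h1⟩ : unitInterval) : ℝ) ≤ 1 / 2 from le_of_eq heq.symm)]
    rw [show pr (2 * ((⟨t, h0, h1⟩ : unitInterval) : ℝ)) = 1 by
      rw [show (2 : ℝ) * t = 1 by rw [← heq]; ring]; exact pr_val 1]
    rw [hH1]
    rw [show (⟨2 * t - 1, by constructor <;> linarith⟩ : unitInterval) = 0 by
      apply Subtype.ext; show 2 * t - 1 = 0; rw [← heq]; ring]
    exact (cyl_zero_eq_base g' (f' x)).symm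
  · rw [if_neg (show ¬ ((⟨t, h0, h1⟩ : unitInterval) : ℝ) ≤ 1 / 2 from not_le.mpr hlt)]
    rw [show pr (2 * ((⟨t, h0, h1⟩ : unitInterval) : ℝ) - 1) =
      ⟨2 * t - 1, by constructor <;> linarith⟩ from pr_mem (by linarith) (by linarith)]

lemma continuous_MCbase (u : X → Y) : Continuous (MC.base u) :=
  (continuous_quot_mk).comp continuous_inr

lemma continuous_Phi (hf' : Continuous f') (hg : Continuous g) (hH : Continuous H)
    (hH1 : ∀ x, H (x, 1) = g' (f' x)) :
    Continuous (Phi f f' g g' H hH0) := by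
  apply continuous_quot_lift
  apply Continuous.sumElim
  · apply Continuous.if_le
    · exact (continuous_MCbase g').comp
        (hH.comp (continuous_fst.prodMk
          (continuous_pr.comp (continuous_const.mul
            (continuous_subtype_val.comp continuous_snd)))))
    · exact (continuous_quot_mk.comp continuous_inl).comp
        ((hf'.comp continuous_fst).prodMk
          (continuous_pr.comp ((continuous_const.mul
            (continuous_subtype_val.comp continuous_snd)).sub continuous_const)))
    · exact continuous_subtype_val.comp continuous_snd
    · exact continuous_const
    · rintro ⟨x, u⟩ hu
      dsimp only at hu ⊢
      rw [show pr (2 * (u : ℝ)) = 1 by rw [hu]; norm_num; exact pr_val 1]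
      rw [show pr (2 * (u : ℝ) - 1) = 0 by rw [hu]; norm_num; exact pr_val 0]
      rw [hH1]
      exact (cyl_zero_eq_base g' (f' x)).symm
  · exact (continuous_MCbase g').comp hg


end Phi

section Psi

variable {X Y Y' Z : Type} [TopologicalSpace X] [TopologicalSpace Y]
  [TopologicalSpace Y'] [TopologicalSpace Z]
  (f : X → Y) (f' : X → Y') (g : Y → Z) (g' : Y' → Z)
  (H K : X × unitInterval → Z)
  (E : unitInterval × unitInterval → unitInterval × unitInterval)

noncomputable def PsiCore (hK0 : ∀ x, K (x, 0) = g' (f' x)) :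
    (X × unitInterval ⊕ Y) → unitInterval → MC (Phi f' f g' g K hK0) :=
  fun a s => Sum.elim
    (fun q : X × unitInterval =>
      Quot.mk _ (Sum.inl (MC.cyl f' q.1 (E (q.2, s)).1, (E (q.2, s)).2)))
    (fun y : Y => Quot.mk _ (Sum.inr (MC.cyl g y s))) a

lemma PsiCore_wd (hK0 : ∀ x, K (x, 0) = g' (f' x)) (hK1 : ∀ x, K (x, 1) = g (f x))
    (hc1 : ∀ s : unitInterval, E (0, s) = (pr ((1 + (s : ℝ)) / 2), 0))
    (s : unitInterval) :
    ∀ a b, MCRel f a b →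
      PsiCore f f' g g' K E hK0 a s = PsiCore f f' g g' K E hK0 b s := by
  rintro _ _ ⟨x, rfl, rfl⟩
  simp only [PsiCore, Sum.elim_inl, Sum.elim_inr]
  show (Quot.mk _ (Sum.inl (MC.cyl f' x (E (0, s)).1, (E (0, s)).2)) :
    MC (Phi f' f g' g K hK0)) = Quot.mk _ (Sum.inr (MC.cyl g (f x) s))
  rw [hc1 s]
  have hs0 := s.2.1
  have hs1 := s.2.2
  have key : Phi f' f g' g K hK0 (MC.cyl f' x (pr ((1 + (s : ℝ)) / 2))) =
      MC.cyl g (f x) s := by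
    rw [pr_mem (by linarith) (by linarith)]
    rw [Phi_cyl_ge f' f g' g K hK0 hK1 x ((1 + (s : ℝ)) / 2) (by linarith) (by linarith)]
    congr 1
    apply Subtype.ext
    show 2 * ((1 + (s : ℝ)) / 2) - 1 = (s : ℝ)
    ring
  calc Quot.mk (MCRel (Phi f' f g' g K hK0))
        (Sum.inl (MC.cyl f' x (pr ((1 + (s : ℝ)) / 2)), 0))
      = Quot.mk _ (Sum.inr (Phi f' f g' g K hK0 (MC.cyl f' x (pr ((1 + (s : ℝ)) / 2))))) :=
        Quot.sound ⟨_, rfl, rfl⟩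
    _ = Quot.mk _ (Sum.inr (MC.cyl g (f x) s)) := by rw [key]

noncomputable def PsiSnd (hK0 : ∀ x, K (x, 0) = g' (f' x)) :
    MC g' → MC (Phi f' f g' g K hK0) :=
  Quot.lift
    (Sum.elim
      (fun q : Y' × unitInterval => Quot.mk _ (Sum.inl (MC.base f' q.1, q.2)))
      (fun z : Z => Quot.mk _ (Sum.inr (MC.base g z))))
    (by rintro _ _ ⟨y', rfl, rfl⟩
        exact Quot.sound ⟨MC.base f' y', rfl, rfl⟩)

noncomputable def Psi (hH0 : ∀ x, H (x, 0) = g (f x)) (hH1 : ∀ x, H (x, 1) = g' (f' x))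
    (hK0 : ∀ x, K (x, 0) = g' (f' x)) (hK1 : ∀ x, K (x, 1) = g (f x))
    (hHK : ∀ x r, K (x, unitInterval.symm r) = H (x, r))
    (hc1 : ∀ s : unitInterval, E (0, s) = (pr ((1 + (s : ℝ)) / 2), 0))
    (hc2 : ∀ t : unitInterval, (t : ℝ) ≤ 1 / 2 → E (t, 0) = (pr (1 / 2 - (t : ℝ)), 0))
    (hc3 : ∀ t : unitInterval, 1 / 2 ≤ (t : ℝ) → E (t, 0) = (0, pr (2 * (t : ℝ) - 1))) :
    MC (Phi f f' g g' H hH0) → MC (Phi f' f g' g K hK0) :=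
  Quot.lift
    (Sum.elim
      (fun p : MC f × unitInterval =>
        Quot.lift (fun a => PsiCore f f' g g' K E hK0 a p.2)
          (PsiCore_wd f f' g g' K E hK0 hK1 hc1 p.2) p.1)
      (PsiSnd f f' g g' K hK0))
    (by
      rintro _ _ ⟨m, rfl, rfl⟩
      induction m using Quot.ind with
      | _ a =>
        rcases a with ⟨x, t⟩ | y
        · obtain ⟨t, ht0, ht1⟩ := t
          rcases le_or_gt t (1 / 2) with hle | hgt
          · rw [show Phi f f' g g' H hH0 (Quot.mk _ (Sum.inl (x, ⟨t, ht0, ht1⟩))) =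
              MC.base g' (H (x, ⟨2 * t, by constructor <;> linarith⟩)) from
              Phi_cyl_le f f' g g' H hH0 x t ht0 hle]
            show Quot.mk _ (Sum.inl (MC.cyl f' x (E (⟨t, ht0, ht1⟩, 0)).1,
              (E (⟨t, ht0, ht1⟩, 0)).2)) =
              Quot.mk _ (Sum.inr (MC.base g (H (x, ⟨2 * t, by constructor <;> linarith⟩))))
            rw [hc2 ⟨t, ht0, ht1⟩ hle]
            have key : Phi f' f g' g K hK0 (MC.cyl f' x (pr (1 / 2 - t))) =
                MC.base g (H (x, ⟨2 * t, by constructor <;> linarith⟩)) := by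
              rw [pr_mem (by linarith) (by linarith)]
              rw [Phi_cyl_le f' f g' g K hK0 x (1 / 2 - t) (by linarith) (by linarith)]
              congr 1
              rw [show (⟨2 * (1 / 2 - t), by constructor <;> linarith⟩ : unitInterval) =
                unitInterval.symm ⟨2 * t, by constructor <;> linarith⟩ from
                Subtype.ext (by rw [unitInterval.coe_symm_eq]; ring)]
              exact hHK x ⟨2 * t, by constructor <;> linarith⟩
            calc Quot.mk (MCRel (Phi f' f g' g K hK0))
                  (Sum.inl (MC.cyl f' x (pr (1 / 2 - t)), 0))
                = Quot.mk _ (Sum.inr (Phi f' f g' g K hK0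
                    (MC.cyl f' x (pr (1 / 2 - t))))) := Quot.sound ⟨_, rfl, rfl⟩
              _ = _ := by rw [key]
          · rw [show Phi f f' g g' H hH0 (Quot.mk _ (Sum.inl (x, ⟨t, ht0, ht1⟩))) =
              MC.cyl g' (f' x) ⟨2 * t - 1, by constructor <;> linarith⟩ from
              Phi_cyl_ge f f' g g' H hH0 hH1 x t (le_of_lt hgt) ht1]
            show Quot.mk _ (Sum.inl (MC.cyl f' x (E (⟨t, ht0, ht1⟩, 0)).1,
              (E (⟨t, ht0, ht1⟩, 0)).2)) =
              Quot.mk _ (Sum.inl (MC.base f' (f' x), ⟨2 * t - 1, by constructor <;> linarith⟩))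
            rw [hc3 ⟨t, ht0, ht1⟩ (le_of_lt hgt)]
            show Quot.mk _ (Sum.inl (MC.cyl f' x 0, pr (2 * t - 1))) = _
            rw [cyl_zero_eq_base f' x, pr_mem (by linarith) (by linarith)]
        · show Quot.mk _ (Sum.inr (MC.cyl g y 0)) = Quot.mk _ (Sum.inr (MC.base g (g y)))
          rw [cyl_zero_eq_base g y])

lemma continuous_Psi (hf' : Continuous f') (hg : Continuous g) (hE : Continuous E)
    (hH0 : ∀ x, H (x, 0) = g (f x)) (hH1 : ∀ x, H (x, 1) = g' (f' x))
    (hK0 : ∀ x, K (x, 0) = g' (f' x)) (hK1 : ∀ x, K (x, 1) = g (f x))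
    (hHK : ∀ x r, K (x, unitInterval.symm r) = H (x, r))
    (hc1 : ∀ s : unitInterval, E (0, s) = (pr ((1 + (s : ℝ)) / 2), 0))
    (hc2 : ∀ t : unitInterval, (t : ℝ) ≤ 1 / 2 → E (t, 0) = (pr (1 / 2 - (t : ℝ)), 0))
    (hc3 : ∀ t : unitInterval, 1 / 2 ≤ (t : ℝ) → E (t, 0) = (0, pr (2 * (t : ℝ) - 1))) :
    Continuous (Psi f f' g g' H K E hH0 hH1 hK0 hK1 hHK hc1 hc2 hc3) := by
  apply continuous_quot_lift
  apply Continuous.sumElim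
  · apply isQuotientMap_quot_mk.continuous_lift_prod_left (f := Quot.mk (MCRel f))
    show Continuous fun p : (X × unitInterval ⊕ Y) × unitInterval =>
      PsiCore f f' g g' K E hK0 p.1 p.2
    have hEc : Continuous fun w : (X × unitInterval) × unitInterval => E (w.1.2, w.2) :=
      hE.comp ((continuous_snd.comp continuous_fst).prodMk continuous_snd)
    have c1 : Continuous fun w : (X × unitInterval) × unitInterval =>
        Quot.mk (MCRel (Phi f' f g' g K hK0))
          (Sum.inl (MC.cyl f' w.1.1 (E (w.1.2, w.2)).1, (E (w.1.2, w.2)).2)) := by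
      exact continuous_quot_mk.comp (continuous_inl.comp
        (((continuous_quot_mk.comp (continuous_inl.comp
          ((continuous_fst.comp continuous_fst).prodMk
            (continuous_fst.comp hEc)))).prodMk (continuous_snd.comp hEc))))
    have c2 : Continuous fun w : Y × unitInterval =>
        Quot.mk (MCRel (Phi f' f g' g K hK0)) (Sum.inr (MC.cyl g w.1 w.2)) := by
      exact continuous_quot_mk.comp (continuous_inr.comp
        (continuous_quot_mk.comp continuous_inl))
    have heq : (fun p : (X × unitInterval ⊕ Y) × unitInterval =>
        PsiCore f f' g g' K E hK0 p.1 p.2) =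
        (Sum.elim
          (fun w : (X × unitInterval) × unitInterval =>
            Quot.mk (MCRel (Phi f' f g' g K hK0))
              (Sum.inl (MC.cyl f' w.1.1 (E (w.1.2, w.2)).1, (E (w.1.2, w.2)).2)))
          (fun w : Y × unitInterval =>
            Quot.mk (MCRel (Phi f' f g' g K hK0)) (Sum.inr (MC.cyl g w.1 w.2)))) ∘
        ⇑(Homeomorph.sumProdDistrib : (X × unitInterval ⊕ Y) × unitInterval ≃ₜ _) := by
      funext p
      rcases p with ⟨a | y, s⟩ <;> rfl
    rw [heq]
    exact (Continuous.sumElim c1 c2).comp (Homeomorph.continuous _)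
  · apply continuous_quot_lift
    apply Continuous.sumElim
    · exact continuous_quot_mk.comp (continuous_inl.comp
        (((continuous_MCbase f').comp continuous_fst).prodMk continuous_snd))
    · exact continuous_quot_mk.comp (continuous_inr.comp (continuous_MCbase g))

lemma Psi_inv (E' : unitInterval × unitInterval → unitInterval × unitInterval)
    (hE'E : ∀ p, E' (E p) = p)
    (hH0 : ∀ x, H (x, 0) = g (f x)) (hH1 : ∀ x, H (x, 1) = g' (f' x))
    (hK0 : ∀ x, K (x, 0) = g' (f' x)) (hK1 : ∀ x, K (x, 1) = g (f x))
    (hHK : ∀ x r, K (x, unitInterval.symm r) = H (x, r))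
    (hKH : ∀ x r, H (x, unitInterval.symm r) = K (x, r))
    (hc1 : ∀ s : unitInterval, E (0, s) = (pr ((1 + (s : ℝ)) / 2), 0))
    (hc2 : ∀ t : unitInterval, (t : ℝ) ≤ 1 / 2 → E (t, 0) = (pr (1 / 2 - (t : ℝ)), 0))
    (hc3 : ∀ t : unitInterval, 1 / 2 ≤ (t : ℝ) → E (t, 0) = (0, pr (2 * (t : ℝ) - 1)))
    (hc1' : ∀ s : unitInterval, E' (0, s) = (pr ((1 + (s : ℝ)) / 2), 0))
    (hc2' : ∀ t : unitInterval, (t : ℝ) ≤ 1 / 2 → E' (t, 0) = (pr (1 / 2 - (t : ℝ)), 0))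
    (hc3' : ∀ t : unitInterval, 1 / 2 ≤ (t : ℝ) → E' (t, 0) = (0, pr (2 * (t : ℝ) - 1))) :
    ∀ q, Psi f' f g' g K H E' hK0 hK1 hH0 hH1 hKH hc1' hc2' hc3'
      (Psi f f' g g' H K E hH0 hH1 hK0 hK1 hHK hc1 hc2 hc3 q) = q := by
  intro q
  induction q using Quot.ind with
  | _ a =>
    rcases a with ⟨m, s⟩ | n
    · induction m using Quot.ind with
      | _ b =>
        rcases b with ⟨x, t⟩ | y
        · show Quot.mk _ (Sum.inl (MC.cyl f x (E' (E (t, s))).1, (E' (E (t, s))).2)) =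
            Quot.mk _ (Sum.inl (MC.cyl f x t, s))
          rw [hE'E (t, s)]
        · rfl
    · induction n using Quot.ind with
      | _ b =>
        rcases b with ⟨y', u⟩ | z <;> rfl

end Psi

end MCAux

/-- Lemma (two-parameter mapping cylinder): given a homotopy commutative square of
compact metrizable spaces `g₊ ∘ f₊ ≃ g₋ ∘ f₋` (via a homotopy `H`), the maps
`Φ₊ : MC(f₊) → MC(g₋)` and `Φ₋ : MC(f₋) → MC(g₊)` described below are well defined
and continuous, and their mapping cylinders `MC(Φ₊)` and `MC(Φ₋)` are homeomorphic. -/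
theorem stmt_16 {X Yp Ym Z : Type}
    [TopologicalSpace X] [CompactSpace X] [TopologicalSpace.MetrizableSpace X]
    [TopologicalSpace Yp] [CompactSpace Yp] [TopologicalSpace.MetrizableSpace Yp]
    [TopologicalSpace Ym] [CompactSpace Ym] [TopologicalSpace.MetrizableSpace Ym]
    [TopologicalSpace Z] [CompactSpace Z] [TopologicalSpace.MetrizableSpace Z]
    (fp : X → Yp) (fm : X → Ym) (gp : Yp → Z) (gm : Ym → Z)
    (hfp : Continuous fp) (hfm : Continuous fm)
    (hgp : Continuous gp) (hgm : Continuous gm)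
    (H : X × unitInterval → Z) (hH : Continuous H)
    (hH0 : ∀ x, H (x, 0) = gp (fp x)) (hH1 : ∀ x, H (x, 1) = gm (fm x)) :
    ∃ (Φp : MC fp → MC gm) (Φm : MC fm → MC gp),
      Continuous Φp ∧ Continuous Φm ∧
      (∀ (x : X) (t : ℝ) (h0 : 0 ≤ t) (h2 : t ≤ 1 / 2),
        Φp (MC.cyl fp x ⟨t, h0, by linarith⟩) =
          MC.base gm (H (x, ⟨2 * t, by constructor <;> linarith⟩))) ∧
      (∀ (x : X) (t : ℝ) (h2 : 1 / 2 ≤ t) (h1 : t ≤ 1),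
        Φp (MC.cyl fp x ⟨t, by linarith, h1⟩) =
          MC.cyl gm (fm x) ⟨2 * t - 1, by constructor <;> linarith⟩) ∧
      (∀ y : Yp, Φp (MC.base fp y) = MC.base gm (gp y)) ∧
      (∀ (x : X) (t : ℝ) (h0 : 0 ≤ t) (h2 : t ≤ 1 / 2),
        Φm (MC.cyl fm x ⟨t, h0, by linarith⟩) =
          MC.base gp (H (x, ⟨1 - 2 * t, by constructor <;> linarith⟩))) ∧
      (∀ (x : X) (t : ℝ) (h2 : 1 / 2 ≤ t) (h1 : t ≤ 1),
        Φm (MC.cyl fm x ⟨t, by linarith, h1⟩) =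
          MC.cyl gp (fp x) ⟨2 * t - 1, by constructor <;> linarith⟩) ∧
      (∀ y : Ym, Φm (MC.base fm y) = MC.base gp (gm y)) ∧
      Nonempty (MC Φp ≃ₜ MC Φm) := by
  classical
  set K : X × unitInterval → Z := fun q => H (q.1, unitInterval.symm q.2) with hKdef
  have hK0 : ∀ x, K (x, 0) = gm (fm x) := fun x => by
    show H (x, unitInterval.symm 0) = _
    rw [unitInterval.symm_zero]; exact hH1 x
  have hK1 : ∀ x, K (x, 1) = gp (fp x) := fun x => by
    show H (x, unitInterval.symm 1) = _
    rw [unitInterval.symm_one]; exact hH0 x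
  have hHK : ∀ x r, K (x, unitInterval.symm r) = H (x, r) := fun x r => by
    show H (x, unitInterval.symm (unitInterval.symm r)) = _
    rw [unitInterval.symm_symm]
  have hKH : ∀ x r, H (x, unitInterval.symm r) = K (x, r) := fun x r => rfl
  have hKc : Continuous K :=
    hH.comp (continuous_fst.prodMk (unitInterval.continuous_symm.comp continuous_snd))
  refine ⟨MCAux.Phi fp fm gp gm H hH0, MCAux.Phi fm fp gm gp K hK0,
    ?_, ?_, ?_, ?_, ?_, ?_, ?_, ?_, ?_⟩
  · exact MCAux.continuous_Phi fp fm gp gm H hH0 hfm hgp hH hH1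
  · exact MCAux.continuous_Phi fm fp gm gp K hK0 hfp hgm hKc hK1
  · intro x t h0 h2; exact MCAux.Phi_cyl_le fp fm gp gm H hH0 x t h0 h2
  · intro x t h2 h1; exact MCAux.Phi_cyl_ge fp fm gp gm H hH0 hH1 x t h2 h1
  · intro y; rfl
  · intro x t h0 h2
    rw [MCAux.Phi_cyl_le fm fp gm gp K hK0 x t h0 h2]
    have key : unitInterval.symm ⟨2 * t, by constructor <;> linarith⟩ =
        (⟨1 - 2 * t, by constructor <;> linarith⟩ : unitInterval) :=
      Subtype.ext (by rw [unitInterval.coe_symm_eq])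
    exact congrArg (fun u => MC.base gp (H (x, u))) key
  · intro x t h2 h1; exact MCAux.Phi_cyl_ge fm fp gm gp K hK0 hK1 x t h2 h1
  · intro y; rfl
  · exact ⟨⟨⟨MCAux.Psi fp fm gp gm H K MCAux.eF hH0 hH1 hK0 hK1 hHK
        MCAux.eF_c1 MCAux.eF_c2 MCAux.eF_c3,
      MCAux.Psi fm fp gm gp K H MCAux.eG hK0 hK1 hH0 hH1 hKH
        MCAux.eG_c1 MCAux.eG_c2 MCAux.eG_c3,
      MCAux.Psi_inv fp fm gp gm H K MCAux.eF MCAux.eG MCAux.eG_eF hH0 hH1 hK0 hK1 hHK hKH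
        MCAux.eF_c1 MCAux.eF_c2 MCAux.eF_c3 MCAux.eG_c1 MCAux.eG_c2 MCAux.eG_c3,
      MCAux.Psi_inv fm fp gm gp K H MCAux.eG MCAux.eF MCAux.eF_eG hK0 hK1 hH0 hH1 hKH hHK
        MCAux.eG_c1 MCAux.eG_c2 MCAux.eG_c3 MCAux.eF_c1 MCAux.eF_c2 MCAux.eF_c3⟩,
      MCAux.continuous_Psi fp fm gp gm H K MCAux.eF hfm hgp MCAux.continuous_eF
        hH0 hH1 hK0 hK1 hHK MCAux.eF_c1 MCAux.eF_c2 MCAux.eF_c3,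
      MCAux.continuous_Psi fm fp gm gp K H MCAux.eG hfp hgm MCAux.continuous_eG
        hK0 hK1 hH0 hH1 hKH MCAux.eG_c1 MCAux.eG_c2 MCAux.eG_c3⟩⟩
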